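/- For a connected complex unit gain graph Θ = (Σ,φ) with a vertex ordering <, the maximum gain distance Laplacian satisfies DL^max_< (Θ) = DH^max_< (Θ) · (DH^max_< (Θ))^T, where DH^max_< (Θ) is the maximum distance incidence matrix. -/

import Mathlib

open Matrix Complex BigOperators

/-- The gain of a walk in a complex unit gain graph: the product of the gains of its
edges in order. -/
def walkGain {n : ℕ} {G : SimpleGraph (Fin n)} (φ : Fin n → Fin n → ℂ) :
    {u v : Fin n} → G.Walk u v → ℂ
  | _, _, SimpleGraph.Walk.nil => 1
  | u, _, SimpleGraph.Walk.cons (v := x) _ p => φ u x * walkGain φ p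

/-- A complex unit gain graph is balanced if every cycle has gain 1. -/
def IsBalanced {n : ℕ} (G : SimpleGraph (Fin n)) (φ : Fin n → Fin n → ℂ) : Prop :=
  ∀ (u : Fin n) (c : G.Walk u u), c.IsCycle → walkGain φ c = 1

/-- The lexicographically maximal gain (first maximizing the real part, then the
imaginary part) among the gains of all shortest paths from `u` to `v`. -/
noncomputable def phiMaxAux {n : ℕ} (G : SimpleGraph (Fin n)) (φ : Fin n → Fin n → ℂ)
    (u v : Fin n) : ℂ :=
  let S : Set ℂ := {z | ∃ p : G.Walk u v, p.length = G.dist u v ∧ z = walkGain φ p}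
  { re := sSup (Complex.re '' S),
    im := sSup (Complex.im '' {z ∈ S | z.re = sSup (Complex.re '' S)}) }

/-- The lexicographically minimal gain among the gains of all shortest paths. -/
noncomputable def phiMinAux {n : ℕ} (G : SimpleGraph (Fin n)) (φ : Fin n → Fin n → ℂ)
    (u v : Fin n) : ℂ :=
  let S : Set ℂ := {z | ∃ p : G.Walk u v, p.length = G.dist u v ∧ z = walkGain φ p}
  { re := sInf (Complex.re '' S),
    im := sInf (Complex.im '' {z ∈ S | z.re = sInf (Complex.re '' S)}) }

/-- Maximum auxiliary gain `φ^max_<` for the standard ordering of `Fin n`. -/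
noncomputable def phiMax {n : ℕ} (G : SimpleGraph (Fin n)) (φ : Fin n → Fin n → ℂ)
    (u v : Fin n) : ℂ :=
  if u = v then 0
  else if u < v then phiMaxAux G φ u v
  else (starRingEnd ℂ) (phiMaxAux G φ v u)

/-- Minimum auxiliary gain `φ^min_<` for the standard ordering of `Fin n`. -/
noncomputable def phiMin {n : ℕ} (G : SimpleGraph (Fin n)) (φ : Fin n → Fin n → ℂ)
    (u v : Fin n) : ℂ :=
  if u = v then 0
  else if u < v then phiMinAux G φ u v
  else (starRingEnd ℂ) (phiMinAux G φ v u)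

/-- The maximum gain distance matrix `D^max_<`. -/
noncomputable def Dmax {n : ℕ} (G : SimpleGraph (Fin n)) (φ : Fin n → Fin n → ℂ) :
    Matrix (Fin n) (Fin n) ℂ :=
  fun s t => phiMax G φ s t * (G.dist s t : ℂ)

/-- The minimum gain distance matrix `D^min_<`. -/
noncomputable def Dmin {n : ℕ} (G : SimpleGraph (Fin n)) (φ : Fin n → Fin n → ℂ) :
    Matrix (Fin n) (Fin n) ℂ :=
  fun s t => phiMin G φ s t * (G.dist s t : ℂ)

/-- The diagonal transmission matrix `Tr(Σ)`, with `tr(v) = Σ_u d(v,u)`. -/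
noncomputable def TrM {n : ℕ} (G : SimpleGraph (Fin n)) : Matrix (Fin n) (Fin n) ℂ :=
  Matrix.diagonal (fun v => ((∑ u, G.dist v u : ℕ) : ℂ))

/-- The maximum gain distance Laplacian `DL^max_< = Tr(Σ) − D^max_<`. -/
noncomputable def DLmax {n : ℕ} (G : SimpleGraph (Fin n)) (φ : Fin n → Fin n → ℂ) :
    Matrix (Fin n) (Fin n) ℂ := TrM G - Dmax G φ

/-- The minimum gain distance Laplacian `DL^min_< = Tr(Σ) − D^min_<`. -/
noncomputable def DLmin {n : ℕ} (G : SimpleGraph (Fin n)) (φ : Fin n → Fin n → ℂ) :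
    Matrix (Fin n) (Fin n) ℂ := TrM G - Dmin G φ

/-- The maximum distance incidence matrix `DH^max_<`: rows indexed by vertices, columns by
pairs `j < k` (oriented from `j` to `k`). -/
noncomputable def DHmax {n : ℕ} (G : SimpleGraph (Fin n)) (φ : Fin n → Fin n → ℂ) :
    Matrix (Fin n) {p : Fin n × Fin n // p.1 < p.2} ℂ := fun v e =>
  if v = e.1.1 then (Real.sqrt (G.dist e.1.1 e.1.2) : ℂ)
  else if v = e.1.2 then -(phiMax G φ e.1.1 e.1.2)⁻¹ * (Real.sqrt (G.dist e.1.1 e.1.2) : ℂ)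
  else 0

open Classical in
lemma walkGain_abs {n : ℕ} {G : SimpleGraph (Fin n)} {φ : Fin n → Fin n → ℂ}
    (hφ1 : ∀ i j, G.Adj i j → ‖φ i j‖ = 1) {u v : Fin n} (p : G.Walk u v) :
    ‖walkGain φ p‖ = 1 := by
  induction p with
  | nil => simp [walkGain]
  | cons h p ih => simp [walkGain, _root_.map_mul, hφ1 _ _ h, ih]

open Classical in
lemma phiMaxAux_abs {n : ℕ} (G : SimpleGraph (Fin n)) (φ : Fin n → Fin n → ℂ)
    (hconn : G.Connected)
    (hφ1 : ∀ i j, G.Adj i j → ‖φ i j‖ = 1) (u v : Fin n) :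
    ‖phiMaxAux G φ u v‖ = 1 := by
  classical
  set S : Set ℂ := {z | ∃ p : G.Walk u v, p.length = G.dist u v ∧ z = walkGain φ p} with hS
  have hSfin : S.Finite := by
    have : S ⊆ (fun p : {p : G.Walk u v // p.length = G.dist u v} => walkGain φ p.1) '' Set.univ := by
      rintro z ⟨p, hp, rfl⟩
      exact ⟨⟨p, hp⟩, Set.mem_univ _, rfl⟩
    exact Set.Finite.subset ((Set.finite_univ).image _) this
  have hSne : S.Nonempty := by
    obtain ⟨p, hp⟩ := hconn.exists_walk_length_eq_dist u v
    exact ⟨walkGain φ p, p, hp, rfl⟩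
  have h1 : sSup (Complex.re '' S) ∈ Complex.re '' S :=
    Set.Nonempty.csSup_mem (hSne.image _) (hSfin.image _)
  obtain ⟨z0, hz0, hz0re⟩ := h1
  set T : Set ℂ := {z ∈ S | z.re = sSup (Complex.re '' S)} with hT
  have hTne : T.Nonempty := ⟨z0, hz0, hz0re⟩
  have hTfin : T.Finite := hSfin.subset (fun z hz => hz.1)
  have h2 : sSup (Complex.im '' T) ∈ Complex.im '' T :=
    Set.Nonempty.csSup_mem (hTne.image _) (hTfin.image _)
  obtain ⟨z1, hz1, hz1im⟩ := h2
  have : phiMaxAux G φ u v = z1 := by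
    apply Complex.ext
    · simpa [phiMaxAux] using hz1.2.symm
    · simpa [phiMaxAux, hT, hS] using hz1im.symm
  rw [this]
  obtain ⟨p, _, rfl⟩ := hz1.1
  exact walkGain_abs hφ1 p

open Classical in
/-- For a connected complex unit gain graph, the maximum gain distance
Laplacian equals the maximum distance incidence matrix times its (conjugate) transpose. -/
theorem DLmax_eq_DHmax_mul_transpose {n : ℕ}
    (G : SimpleGraph (Fin n)) (φ : Fin n → Fin n → ℂ)
    (hconn : G.Connected)
    (hφ1 : ∀ i j, G.Adj i j → ‖φ i j‖ = 1)
    (hφ2 : ∀ i j, G.Adj i j → φ j i = (φ i j)⁻¹) :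
    DLmax G φ = DHmax G φ * (DHmax G φ)ᴴ := by
  classical
  have habs : ∀ u v : Fin n, ‖phiMaxAux G φ u v‖ = 1 :=
    fun u v => phiMaxAux_abs G φ hconn hφ1 u v
  have hconj : ∀ u v : Fin n, (starRingEnd ℂ) (phiMaxAux G φ u v) = (phiMaxAux G φ u v)⁻¹ := by
    intro u v
    rw [Complex.inv_def, Complex.normSq_eq_norm_sq, habs]
    simp
  have hne : ∀ u v : Fin n, phiMaxAux G φ u v ≠ 0 := by
    intro u v h
    have := habs u v
    rw [h] at this; simp at this
  have hsq : ∀ u v : Fin n,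
      (Real.sqrt (G.dist u v) : ℂ) * (Real.sqrt (G.dist u v) : ℂ) = (G.dist u v : ℂ) := by
    intro u v
    rw [← Complex.ofReal_mul, Real.mul_self_sqrt (Nat.cast_nonneg _)]
    simp
  ext s t
  rw [Matrix.mul_apply]
  rcases lt_trichotomy s t with hst | hst | hst
  · -- s < t
    have hsne : s ≠ t := ne_of_lt hst
    rw [Finset.sum_eq_single (⟨(s, t), hst⟩ : {p : Fin n × Fin n // p.1 < p.2})]
    · have hA : DHmax G φ s ⟨(s, t), hst⟩ = (Real.sqrt (G.dist s t) : ℂ) := by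
        simp [DHmax]
      have hB : DHmax G φ t ⟨(s, t), hst⟩ =
          -(phiMaxAux G φ s t)⁻¹ * (Real.sqrt (G.dist s t) : ℂ) := by
        simp [DHmax, Ne.symm hsne, phiMax, hsne, hst]
      rw [conjTranspose_apply, hA, hB]
      rw [Complex.star_def, _root_.map_mul, map_neg, map_inv₀, hconj, inv_inv,
        Complex.conj_ofReal]
      simp only [DLmax, Matrix.sub_apply, TrM, Matrix.diagonal_apply_ne _ hsne, Dmax,
        phiMax, if_neg hsne, if_pos hst]
      have := hsq s t
      ring_nf
      ring_nf at this
      rw [this]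
      all_goals ring
    · intro e _ hne'
      simp only [conjTranspose_apply, DHmax]
      by_cases h1 : s = e.1.1
      · by_cases h2 : t = e.1.1
        · exact absurd (h1.trans h2.symm) hsne
        · by_cases h3 : t = e.1.2
          · exfalso; apply hne'; ext <;> simp [← h1, ← h3]
          · simp [if_neg h2, if_neg h3]
      · by_cases h4 : s = e.1.2
        · by_cases h2 : t = e.1.1
          · exfalso; exact absurd (h2 ▸ h4 ▸ e.2) (asymm hst)
          · by_cases h3 : t = e.1.2
            · exact absurd (h4.trans h3.symm) hsne
            · simp [if_neg h2, if_neg h3]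
        · simp [if_neg h1, if_neg h4]
    · intro h; exact absurd (Finset.mem_univ _) h
  · -- s = t : diagonal
    subst hst
    simp only [DLmax, Matrix.sub_apply, TrM, Matrix.diagonal_apply_eq, Dmax, phiMax,
      if_pos rfl, zero_mul, sub_zero]
    have hterm : ∀ e : {p : Fin n × Fin n // p.1 < p.2},
        DHmax G φ s e * (DHmax G φ)ᴴ e s =
        if s = e.1.1 ∨ s = e.1.2 then (G.dist e.1.1 e.1.2 : ℂ) else 0 := by
      intro e
      simp only [conjTranspose_apply, DHmax]
      by_cases h1 : s = e.1.1
      · rw [if_pos h1, if_pos (Or.inl h1), Complex.star_def, Complex.conj_ofReal, hsq]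
      · by_cases h2 : s = e.1.2
        · rw [if_neg h1, if_pos h2, if_pos (Or.inr h2)]
          have he : phiMax G φ e.1.1 e.1.2 = phiMaxAux G φ e.1.1 e.1.2 := by
            simp [phiMax, ne_of_lt e.2, e.2]
          rw [Complex.star_def, _root_.map_mul, map_neg, map_inv₀, Complex.conj_ofReal,
            he, hconj, inv_inv]
          have : -(phiMaxAux G φ e.1.1 e.1.2)⁻¹ * (Real.sqrt (G.dist e.1.1 e.1.2) : ℂ) *
              (-(phiMaxAux G φ e.1.1 e.1.2) * (Real.sqrt (G.dist e.1.1 e.1.2) : ℂ)) =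
              ((phiMaxAux G φ e.1.1 e.1.2)⁻¹ * phiMaxAux G φ e.1.1 e.1.2) *
              ((Real.sqrt (G.dist e.1.1 e.1.2) : ℂ) * (Real.sqrt (G.dist e.1.1 e.1.2) : ℂ)) := by
            ring
          rw [this, inv_mul_cancel₀ (hne _ _), one_mul, hsq]
        · simp [h1, h2]
    rw [Finset.sum_congr rfl (fun e _ => hterm e)]
    have step1 : ∑ e : {p : Fin n × Fin n // p.1 < p.2},
        (if s = e.1.1 ∨ s = e.1.2 then (G.dist e.1.1 e.1.2 : ℂ) else 0) =
        ∑ p ∈ (Finset.univ : Finset (Fin n × Fin n)).filter (fun p => p.1 < p.2),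
        (if s = p.1 ∨ s = p.2 then (G.dist p.1 p.2 : ℂ) else 0) :=
      (Finset.sum_subtype (p := fun p : Fin n × Fin n => p.1 < p.2)
        (Finset.univ.filter (fun p : Fin n × Fin n => p.1 < p.2))
        (fun x => by simp) (fun p => if s = p.1 ∨ s = p.2 then (G.dist p.1 p.2 : ℂ) else 0)).symm
    rw [step1, Finset.sum_filter, Fintype.sum_prod_type]
    have step2 : ∀ j k : Fin n,
        (if j < k then (if s = j ∨ s = k then (G.dist j k : ℂ) else 0) else 0) =
        (if j = s then (if s < k then (G.dist s k : ℂ) else 0) else 0) +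
        (if k = s then (if j < s then (G.dist j s : ℂ) else 0) else 0) := by
      intro j k
      by_cases hj : j = s
      · subst hj
        by_cases hk : k = j
        · subst hk; simp
        · simp [hk, Ne.symm hk]
      · by_cases hk : k = s
        · subst hk
          simp [hj, Ne.symm hj]
        · simp [hj, hk, Ne.symm hj, Ne.symm hk]
    simp only [step2]
    simp only [Finset.sum_add_distrib]
    have hA : ∀ x : Fin n,
        (∑ k : Fin n, if x = s then (if s < k then (G.dist s k : ℂ) else 0) else 0)
        = if x = s then (∑ k : Fin n, if s < k then (G.dist s k : ℂ) else 0) else 0 := by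
      intro x; split_ifs <;> simp
    have hB : ∀ x : Fin n,
        (∑ k : Fin n, if k = s then (if x < s then (G.dist x s : ℂ) else 0) else 0)
        = if x < s then (G.dist x s : ℂ) else 0 := by
      intro x
      rw [Finset.sum_ite_eq' Finset.univ s (fun _ => if x < s then (G.dist x s : ℂ) else 0)]
      simp
    simp only [hA, hB]
    rw [Finset.sum_ite_eq' Finset.univ s
      (fun _ => ∑ k : Fin n, if s < k then (G.dist s k : ℂ) else 0)]
    simp only [Finset.mem_univ, if_true]
    rw [← Finset.sum_add_distrib]
    have step3 : ∀ u : Fin n,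
        ((if s < u then (G.dist s u : ℂ) else 0) +
          (if u < s then (G.dist u s : ℂ) else 0)) = (G.dist s u : ℂ) := by
      intro u
      rcases lt_trichotomy s u with h | h | h
      · simp [h, asymm h]
      · subst h; simp [SimpleGraph.dist_self]
      · simp [h, asymm h, SimpleGraph.dist_comm]
    rw [Finset.sum_congr rfl (fun u _ => step3 u)]
    rw [zero_mul, sub_zero]
    push_cast
    rfl
  · -- t < s
    have hsne : s ≠ t := ne_of_gt hst
    rw [Finset.sum_eq_single (⟨(t, s), hst⟩ : {p : Fin n × Fin n // p.1 < p.2})]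
    · have hA : DHmax G φ s ⟨(t, s), hst⟩ =
          -(phiMaxAux G φ t s)⁻¹ * (Real.sqrt (G.dist t s) : ℂ) := by
        simp [DHmax, hsne, phiMax, ne_of_lt hst, hst]
      have hB : DHmax G φ t ⟨(t, s), hst⟩ = (Real.sqrt (G.dist t s) : ℂ) := by
        simp [DHmax]
      rw [conjTranspose_apply, hA, hB, Complex.star_def, Complex.conj_ofReal]
      simp only [DLmax, Matrix.sub_apply, TrM, Matrix.diagonal_apply_ne _ hsne, Dmax,
        phiMax, if_neg hsne, if_neg (asymm hst), hconj]
      rw [SimpleGraph.dist_comm]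
      have := hsq t s
      ring_nf
      ring_nf at this
      rw [this]
      all_goals ring
    · intro e _ hne'
      simp only [conjTranspose_apply, DHmax]
      by_cases h1 : s = e.1.1
      · by_cases h2 : t = e.1.1
        · exact absurd (h1.trans h2.symm) hsne
        · by_cases h3 : t = e.1.2
          · exfalso; exact absurd (h1 ▸ h3 ▸ e.2) (asymm hst)
          · simp [if_neg h2, if_neg h3]
      · by_cases h4 : s = e.1.2
        · by_cases h2 : t = e.1.1
          · exfalso; apply hne'; ext <;> simp [← h2, ← h4]
          · by_cases h3 : t = e.1.2
            · exact absurd (h4.trans h3.symm) hsne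
            · simp [if_neg h2, if_neg h3]
        · simp [if_neg h1, if_neg h4]
    · intro h; exact absurd (Finset.mem_univ _) h
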